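/- For integers ℓ ≥ 2 let n_ℓ := ℓ·⌈(ln ℓ)²⌉ + 1 and θ_ℓ := π/(2(n_ℓ−1)). Then √2·∑_{ℓ=2}^∞ (n_ℓ − 1)·(1 − cos(θ_ℓ)) ≤ 6. In particular, √2·∑_{ℓ=2}^∞ π²/(8·ℓ·⌈(ln ℓ)²⌉) ≤ 6. -/

import Mathlib

open scoped BigOperators ENNReal NNReal

noncomputable section

namespace Stmt10

/-- `n_ℓ := ℓ·⌈(ln ℓ)²⌉ + 1`. -/
def nl (l : ℕ) : ℕ := l * ⌈(Real.log l) ^ 2⌉₊ + 1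

/-- `θ_ℓ := π / (2(n_ℓ − 1))`. -/
def θ (l : ℕ) : ℝ := Real.pi / (2 * ((nl l : ℝ) - 1))

lemma log2_lt : Real.log 2 ≤ 0.6932 := by
  have := Real.log_two_lt_d9; linarith

lemma log2_gt : 0.6931 ≤ Real.log 2 := by
  have := Real.log_two_gt_d9; linarith

lemma m_pos {l : ℕ} (hl : 2 ≤ l) : 1 ≤ ⌈(Real.log l) ^ 2⌉₊ := by
  have h2 : (2:ℝ) ≤ l := by exact_mod_cast hl
  have hlog : 0 < Real.log l := Real.log_pos (by linarith)
  exact Nat.one_le_ceil_iff.mpr (by positivity)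

lemma m2 : ⌈(Real.log 2) ^ 2⌉₊ = 1 := by
  have h0 : 0 < Real.log 2 := Real.log_pos (by norm_num)
  have h1 : (Real.log 2) ^ 2 ≤ 1 := by nlinarith [log2_lt]
  have hle : ⌈(Real.log 2) ^ 2⌉₊ ≤ 1 := Nat.ceil_le.mpr (by exact_mod_cast h1)
  have hge : 1 ≤ ⌈(Real.log 2) ^ 2⌉₊ := Nat.one_le_ceil_iff.mpr (by positivity)
  omega

/-- telescoping bound -/
lemma tele {k : ℕ} (hk : 3 ≤ k) :
    1 / ((k : ℝ) * (⌈(Real.log k) ^ 2⌉₊ : ℝ)) ≤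
      1 / Real.log ((k : ℝ) - 1) - 1 / Real.log k := by
  have hk3 : (3:ℝ) ≤ (k:ℝ) := by exact_mod_cast hk
  set L1 := Real.log ((k:ℝ) - 1)
  set L2 := Real.log (k:ℝ)
  have hL1 : 0 < L1 := Real.log_pos (by linarith)
  have hL2 : 0 < L2 := Real.log_pos (by linarith)
  have hL12 : L1 ≤ L2 := Real.log_le_log (by linarith) (by linarith)
  have hdiff : 1 / (k:ℝ) ≤ L2 - L1 := by
    have hpos : (0:ℝ) < ((k:ℝ) - 1) / k := div_pos (by linarith) (by linarith)
    have h := Real.log_le_sub_one_of_pos hpos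
    have heq : Real.log (((k:ℝ) - 1) / k) = L1 - L2 :=
      Real.log_div (by linarith) (by linarith)
    rw [heq] at h
    have : ((k:ℝ) - 1) / k - 1 = -(1 / k) := by field_simp; ring
    rw [this] at h; linarith
  have hm : L2 ^ 2 ≤ (⌈(Real.log k) ^ 2⌉₊ : ℝ) := Nat.le_ceil _
  have hmpos : (0:ℝ) < (⌈(Real.log k) ^ 2⌉₊ : ℝ) := lt_of_lt_of_le (by positivity) hm
  rw [div_sub_div _ _ (ne_of_gt hL1) (ne_of_gt hL2), div_le_div_iff₀ (by positivity) (by positivity)]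
  have hkpos : (0:ℝ) < (k:ℝ) := by linarith
  have h1 : L1 * L2 ≤ (⌈(Real.log (k:ℝ)) ^ 2⌉₊ : ℝ) := by nlinarith
  have h3 : (1/(k:ℝ)) * ((k:ℝ) * (⌈(Real.log (k:ℝ)) ^ 2⌉₊ : ℝ)) =
      (⌈(Real.log (k:ℝ)) ^ 2⌉₊ : ℝ) := by field_simp
  nlinarith [mul_le_mul_of_nonneg_right hdiff (mul_pos hkpos hmpos).le]

def f (l : ℕ) : ℝ := if 2 ≤ l then 1 / ((l : ℝ) * (⌈(Real.log l) ^ 2⌉₊ : ℝ)) else 0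

lemma f_nonneg (l : ℕ) : 0 ≤ f l := by
  unfold f; split <;> positivity

lemma partial_sum (N : ℕ) :
    ∑ l ∈ Finset.range (N + 3), f l ≤ 1/2 + 1 / Real.log 2 - 1 / Real.log ((N:ℝ) + 2) := by
  induction N with
  | zero =>
      have : ∑ l ∈ Finset.range 3, f l = 1/2 := by
        simp [Finset.sum_range_succ, f, m2]
      rw [this]
      norm_num
  | succ n ih =>
      rw [show n + 1 + 3 = (n + 3) + 1 from rfl, Finset.sum_range_succ]
      have hf : f (n + 3) = 1 / (((n:ℝ) + 3) * (⌈(Real.log ((n:ℕ) + 3 : ℕ)) ^ 2⌉₊ : ℝ)) := by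
        unfold f
        rw [if_pos (by omega)]
        push_cast
        ring_nf
      have ht := tele (k := n + 3) (by omega)
      have hcast : ((n + 3 : ℕ) : ℝ) - 1 = (n:ℝ) + 2 := by push_cast; ring
      rw [hcast] at ht
      have hcast2 : (((n + 1 : ℕ)):ℝ) + 2 = ((n + 3 : ℕ) : ℝ) := by push_cast; ring
      push_cast at ht hf ⊢
      calc ∑ l ∈ Finset.range (n + 3), f l + f (n + 3)
          ≤ (1/2 + 1 / Real.log 2 - 1 / Real.log ((n:ℝ) + 2)) +
            (1 / Real.log ((n:ℝ) + 2) - 1 / Real.log ((n:ℝ) + 3)) := by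
            rw [hf]; push_cast; exact add_le_add ih ht
        _ = 1/2 + 1 / Real.log 2 - 1 / Real.log ((n:ℝ) + 3) := by ring
        _ = 1/2 + 1 / Real.log 2 - 1 / Real.log ((n:ℝ) + 1 + 2) := by ring_nf

lemma sum3 : ∑ l ∈ Finset.range 3, f l = 1/2 := by
  simp [Finset.sum_range_succ, f, m2]

lemma partial_sum' (N : ℕ) : ∑ l ∈ Finset.range N, f l ≤ 1/2 + 1 / Real.log 2 := by
  have hlog2 : 0 < Real.log 2 := Real.log_pos (by norm_num)
  have h0 : (0:ℝ) < 1 / Real.log 2 := by positivity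
  rcases le_or_gt N 3 with h | h
  · have hle : ∑ l ∈ Finset.range N, f l ≤ ∑ l ∈ Finset.range 3, f l :=
      Finset.sum_le_sum_of_subset_of_nonneg (Finset.range_subset_range.mpr h)
        (fun i _ _ => f_nonneg i)
    rw [sum3] at hle
    linarith
  · obtain ⟨M, rfl⟩ : ∃ M, N = M + 3 := ⟨N - 3, by omega⟩
    have h2 : (0:ℝ) < 1 / Real.log ((M:ℝ) + 2) := by
      have hM : (0:ℝ) ≤ (M:ℝ) := Nat.cast_nonneg M
      have : (0:ℝ) < Real.log ((M:ℝ) + 2) := Real.log_pos (by linarith)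
      positivity
    have := partial_sum M
    linarith

lemma sqrt2_le : Real.sqrt 2 ≤ 1.5 := by
  rw [show (1.5:ℝ) = Real.sqrt (1.5 ^ 2) from (Real.sqrt_sq (by norm_num)).symm]
  exact Real.sqrt_le_sqrt (by norm_num)

lemma Cnum : Real.sqrt 2 * (Real.pi ^ 2 / 8 * (1/2 + 1 / Real.log 2)) ≤ 6 := by
  have hlog2 : 0 < Real.log 2 := Real.log_pos (by norm_num)
  have hil : 1 / Real.log 2 ≤ 1.4429 := by
    rw [div_le_iff₀ hlog2]; nlinarith [log2_gt]
  have hil0 : 0 ≤ 1 / Real.log 2 := by positivity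
  have hp : Real.pi ≤ 3.15 := Real.pi_lt_d2.le
  have hp0 : 0 < Real.pi := Real.pi_pos
  have hs0 : 0 ≤ Real.sqrt 2 := Real.sqrt_nonneg 2
  have hps : Real.pi ^ 2 ≤ 9.9225 := by nlinarith
  have hb : Real.pi ^ 2 / 8 * (1/2 + 1 / Real.log 2) ≤ 9.9225 / 8 * (1/2 + 1.4429) := by
    have h8 : Real.pi ^ 2 / 8 ≤ 9.9225 / 8 := by linarith
    have h0 : (0:ℝ) ≤ Real.pi ^ 2 / 8 := by positivity
    nlinarith
  nlinarith [sqrt2_le, mul_le_mul_of_nonneg_left hb hs0]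

lemma sum2_bound :
    (∑' l : ℕ, if 2 ≤ l then
      ENNReal.ofReal (Real.pi ^ 2 / (8 * l * (⌈(Real.log l) ^ 2⌉₊ : ℝ))) else 0) ≤
    ENNReal.ofReal (Real.pi ^ 2 / 8 * (1/2 + 1 / Real.log 2)) := by
  have hrw : ∀ l : ℕ, (if 2 ≤ l then
      ENNReal.ofReal (Real.pi ^ 2 / (8 * l * (⌈(Real.log l) ^ 2⌉₊ : ℝ))) else 0)
      = ENNReal.ofReal (Real.pi ^ 2 / 8 * f l) := by
    intro l
    by_cases h : 2 ≤ l
    · rw [if_pos h]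
      unfold f
      rw [if_pos h]
      congr 1
      field_simp
    · rw [if_neg h]
      unfold f
      rw [if_neg h, mul_zero, ENNReal.ofReal_zero]
  calc (∑' l : ℕ, if 2 ≤ l then
      ENNReal.ofReal (Real.pi ^ 2 / (8 * l * (⌈(Real.log l) ^ 2⌉₊ : ℝ))) else 0)
      = ∑' l : ℕ, ENNReal.ofReal (Real.pi ^ 2 / 8 * f l) := tsum_congr hrw
    _ ≤ ENNReal.ofReal (Real.pi ^ 2 / 8 * (1/2 + 1 / Real.log 2)) := by
        rw [ENNReal.tsum_eq_iSup_nat]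
        apply iSup_le
        intro N
        rw [← ENNReal.ofReal_sum_of_nonneg (fun i _ => by
          have := f_nonneg i; positivity)]
        apply ENNReal.ofReal_le_ofReal
        rw [← Finset.mul_sum]
        have hps : (0:ℝ) ≤ Real.pi ^ 2 / 8 := by positivity
        exact mul_le_mul_of_nonneg_left (partial_sum' N) hps

lemma term1_le (l : ℕ) (hl : 2 ≤ l) :
    ((nl l : ℝ) - 1) * (1 - Real.cos (θ l)) ≤
      Real.pi ^ 2 / (8 * l * (⌈(Real.log l) ^ 2⌉₊ : ℝ)) := by
  have hm := m_pos hl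
  set m := ⌈(Real.log l) ^ 2⌉₊ with hmdef
  have hd : ((nl l : ℝ) - 1) = (l : ℝ) * m := by
    unfold nl
    push_cast
    ring
  have hl2 : (2:ℝ) ≤ (l:ℝ) := by exact_mod_cast hl
  have hm1 : (1:ℝ) ≤ (m:ℝ) := by exact_mod_cast hm
  have hdpos : (0:ℝ) < (l : ℝ) * m := by nlinarith
  have hθ : θ l = Real.pi / (2 * ((l:ℝ) * m)) := by
    unfold θ
    rw [hd]
  have hcos : 1 - Real.cos (θ l) ≤ (θ l) ^ 2 / 2 := by
    have := Real.one_sub_sq_div_two_le_cos (x := θ l)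
    linarith
  have hθsq : (θ l) ^ 2 / 2 = Real.pi ^ 2 / (8 * ((l:ℝ) * m) ^ 2) := by
    rw [hθ]
    field_simp
    ring
  have hcosnn : 0 ≤ 1 - Real.cos (θ l) := by
    have := Real.cos_le_one (θ l)
    linarith
  calc ((nl l : ℝ) - 1) * (1 - Real.cos (θ l))
      ≤ ((l:ℝ) * m) * (Real.pi ^ 2 / (8 * ((l:ℝ) * m) ^ 2)) := by
        rw [hd]
        apply mul_le_mul_of_nonneg_left _ hdpos.le
        rw [← hθsq]
        exact hcos
    _ = Real.pi ^ 2 / (8 * l * m) := by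
        field_simp

theorem stmt10 :
    ENNReal.ofReal (Real.sqrt 2) *
        (∑' l : ℕ, if 2 ≤ l then
          ENNReal.ofReal (((nl l : ℝ) - 1) * (1 - Real.cos (θ l))) else 0) ≤ 6 ∧
    ENNReal.ofReal (Real.sqrt 2) *
        (∑' l : ℕ, if 2 ≤ l then
          ENNReal.ofReal (Real.pi ^ 2 / (8 * l * (⌈(Real.log l) ^ 2⌉₊ : ℝ))) else 0) ≤ 6 := by
  have hC : ENNReal.ofReal (Real.sqrt 2) *
      ENNReal.ofReal (Real.pi ^ 2 / 8 * (1/2 + 1 / Real.log 2)) ≤ 6 := by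
    rw [← ENNReal.ofReal_mul (Real.sqrt_nonneg 2)]
    calc ENNReal.ofReal (Real.sqrt 2 * (Real.pi ^ 2 / 8 * (1/2 + 1 / Real.log 2)))
        ≤ ENNReal.ofReal 6 := ENNReal.ofReal_le_ofReal Cnum
      _ = 6 := by norm_num [ENNReal.ofReal_ofNat]
  have hle12 : (∑' l : ℕ, if 2 ≤ l then
      ENNReal.ofReal (((nl l : ℝ) - 1) * (1 - Real.cos (θ l))) else 0) ≤
      (∑' l : ℕ, if 2 ≤ l then
      ENNReal.ofReal (Real.pi ^ 2 / (8 * l * (⌈(Real.log l) ^ 2⌉₊ : ℝ))) else 0) := by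
    apply ENNReal.tsum_le_tsum
    intro l
    by_cases h : 2 ≤ l
    · rw [if_pos h, if_pos h]
      exact ENNReal.ofReal_le_ofReal (term1_le l h)
    · rw [if_neg h, if_neg h]
  constructor
  · calc _ ≤ ENNReal.ofReal (Real.sqrt 2) *
        (∑' l : ℕ, if 2 ≤ l then
          ENNReal.ofReal (Real.pi ^ 2 / (8 * l * (⌈(Real.log l) ^ 2⌉₊ : ℝ))) else 0) :=
          mul_le_mul_right hle12 _
      _ ≤ ENNReal.ofReal (Real.sqrt 2) *
          ENNReal.ofReal (Real.pi ^ 2 / 8 * (1/2 + 1 / Real.log 2)) :=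
          mul_le_mul_right sum2_bound _
      _ ≤ 6 := hC
  · calc _ ≤ ENNReal.ofReal (Real.sqrt 2) *
          ENNReal.ofReal (Real.pi ^ 2 / 8 * (1/2 + 1 / Real.log 2)) :=
          mul_le_mul_right sum2_bound _
      _ ≤ 6 := hC

end Stmt10
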